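/- Let A be a finite-dimensional k-algebra and M a finite-dimensional right A-module. A morphism f : X → M in mod A is right minimal (i.e., every h ∈ End_A(X) with f ∘ h = f is an automorphism) if and only if Ker f contains no nonzero direct summand of X. -/

import Mathlib

/-- A morphism `f : X → M` of modules is *right minimal* if every endomorphism `h` of `X`
with `f ∘ h = f` is an automorphism. -/
def RightMinimal {R X M : Type*} [Ring R] [AddCommGroup X] [Module R X]
    [AddCommGroup M] [Module R M] (f : X →ₗ[R] M) : Prop :=
  ∀ h : X →ₗ[R] X, f.comp h = f → Function.Bijective h

/-- A morphism `f : X → M` of finite-dimensional right modules over a finite-dimensional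
`k`-algebra `A` is right minimal iff `Ker f` contains no nonzero direct summand of `X`. -/
theorem rightMinimal_iff_ker_no_nonzero_summand
    {k A : Type*} [Field k] [Ring A] [Algebra k A] [FiniteDimensional k A]
    {X M : Type*}
    [AddCommGroup X] [Module Aᵐᵒᵖ X] [Module k X] [IsScalarTower k Aᵐᵒᵖ X]
    [FiniteDimensional k X]
    [AddCommGroup M] [Module Aᵐᵒᵖ M] [Module k M] [IsScalarTower k Aᵐᵒᵖ M]
    [FiniteDimensional k M]
    (f : X →ₗ[Aᵐᵒᵖ] M) :
    RightMinimal f ↔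
      ∀ N : Submodule Aᵐᵒᵖ X, N ≤ LinearMap.ker f →
        (∃ N' : Submodule Aᵐᵒᵖ X, IsCompl N N') → N = ⊥ := by
  constructor
  · intro hmin N hN ⟨N', hc⟩
    -- projection onto N' along N
    set p : X →ₗ[Aᵐᵒᵖ] X := N'.subtype.comp (N'.linearProjOfIsCompl N hc.symm) with hp
    have hfp : f.comp p = f := by
      ext x
      obtain ⟨n, n', hn, hn', rfl⟩ := Submodule.codisjoint_iff_exists_add_eq.mp hc.codisjoint x
      have h1 : p n = 0 := by
        simp [hp, Submodule.linearProjOfIsCompl, Submodule.linearProjOfIsCompl_apply_right' hc.symm hn]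
      have h2 : p n' = n' := by
        simp [hp, Submodule.linearProjOfIsCompl, Submodule.linearProjOfIsCompl_apply_left hc.symm ⟨n', hn'⟩]
      have h3 : f n = 0 := hN hn
      simp [LinearMap.comp_apply, map_add, h1, h2, h3]
    have hbij := hmin p hfp
    ext x
    simp only [Submodule.mem_bot]
    constructor
    · intro hx
      have : p x = 0 := by
        simp [hp, Submodule.linearProjOfIsCompl, Submodule.linearProjOfIsCompl_apply_right' hc.symm hx]
      have h0 : p 0 = 0 := map_zero p
      exact hbij.1 (this.trans h0.symm)
    · rintro rfl; exact N.zero_mem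
  · intro H h hfh
    -- Fitting's lemma
    haveI : IsNoetherian Aᵐᵒᵖ X := isNoetherian_of_tower k inferInstance
    haveI : IsArtinian Aᵐᵒᵖ X := isArtinian_of_tower k inferInstance
    obtain ⟨m, hm⟩ := Filter.eventually_atTop.mp
      (h.eventually_isCompl_ker_pow_range_pow.and (Filter.eventually_ge_atTop 1))
    obtain ⟨hcompl, hn⟩ := hm m le_rfl
    set n := m
    have hker : LinearMap.ker (h ^ n) ≤ LinearMap.ker f := by
      intro x hx
      have hpow : f.comp (h ^ n) = f := by
        clear hx
        induction n with
        | zero => simp [pow_zero, Module.End.one_eq_id]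
        | succ j ih =>
          rw [pow_succ, Module.End.mul_eq_comp, ← LinearMap.comp_assoc, ih, hfh]
      have := congrArg (fun g => g x) hpow
      simp only [LinearMap.comp_apply] at this
      rw [LinearMap.mem_ker] at hx ⊢
      rw [← this, hx, map_zero]
    have hbot : LinearMap.ker (h ^ n) = ⊥ :=
      H _ hker ⟨LinearMap.range (h ^ n), hcompl⟩
    have hinj : Function.Injective h := by
      have : Function.Injective (h ^ n) := LinearMap.ker_eq_bot.mp hbot
      exact Module.End.injective_of_iterate_injective (Nat.one_le_iff_ne_zero.mp hn) this
    refine ⟨hinj, ?_⟩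
    have : Function.Surjective (h.restrictScalars k) :=
      (LinearMap.injective_iff_surjective (f := h.restrictScalars k)).mp hinj
    exact this
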